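/- arXiv:0906.1335 — 2 statements merged into one kernel-verified Lean document; each statement's English description precedes it below -/
import Mathlib

section
/- Let ℓ, k₁ ≥ 1, k₂ ≥ 1, and ρ ∈ ℤ. The ring ℤ[v₁,…,v_{ℓ+1}, w₁,…,w_{k₁+k₂}] modulo the ideal generated by v₁⋯v_{ℓ+1}, w₁⋯w_{k₁+k₂}, the elements vᵢ + v_{ℓ+1} (1 ≤ i ≤ ℓ), w_j + ρ·v_{ℓ+1} + w_{k₁+k₂} (1 ≤ j ≤ k₁), and w_j + w_{k₁+k₂} (k₁+1 ≤ j ≤ k₁+k₂−1), is isomorphic to ℤ[x,y]/⟨x^{ℓ+1}, y^{k₂}·(y + ρx)^{k₁}⟩. -/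
open MvPolynomial

set_option maxRecDepth 10000
set_option maxHeartbeats 2000000

private lemma prod_three {R : Type*} [CommMonoid R] {n : ℕ} (p q : ℕ) (hn : n = p + q + 1)
    (a b c : R) (f : Fin n → R)
    (ha : ∀ j : Fin n, (j : ℕ) < p → f j = a)
    (hb : ∀ j : Fin n, p ≤ (j : ℕ) → (j : ℕ) < p + q → f j = b)
    (hc : ∀ j : Fin n, (j : ℕ) = p + q → f j = c) :
    ∏ j, f j = a ^ p * b ^ q * c := by
  subst hn
  have key : ∀ j : Fin (p + q + 1),
      f j = (fun m : ℕ => if m < p then a else if m < p + q then b else c) (j : ℕ) := by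
    intro j
    by_cases h1 : (j : ℕ) < p
    · simpa [h1] using ha j h1
    · by_cases h2 : (j : ℕ) < p + q
      · simp only [if_neg h1, if_pos h2]
        exact hb j (by omega) h2
      · simp only [if_neg h1, if_neg h2]
        exact hc j (by omega)
  calc ∏ j, f j
      = ∏ j : Fin (p + q + 1),
          (fun m : ℕ => if m < p then a else if m < p + q then b else c) (j : ℕ) :=
        Finset.prod_congr rfl fun j _ => key j
    _ = ∏ m ∈ Finset.range (p + q + 1), (if m < p then a else if m < p + q then b else c) :=
        Fin.prod_univ_eq_prod_range
          (fun m : ℕ => if m < p then a else if m < p + q then b else c) (p + q + 1)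
    _ = a ^ p * b ^ q * c := by
        rw [Finset.prod_range_succ, Finset.prod_range_add]
        have e1 : ∀ i ∈ Finset.range p, (if i < p then a else if i < p + q then b else c) = a :=
          fun i hi => if_pos (Finset.mem_range.mp hi)
        have e2 : ∀ i ∈ Finset.range q,
            (if p + i < p then a else if p + i < p + q then b else c) = b := by
          intro i hi
          have := Finset.mem_range.mp hi
          rw [if_neg (by omega), if_pos (by omega)]
        rw [Finset.prod_congr rfl e1, Finset.prod_congr rfl e2, Finset.prod_const,
          Finset.prod_const, Finset.card_range, Finset.card_range,
          if_neg (by omega), if_neg (by omega)]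

private lemma cancel_neg_one_pow {R : Type*} [Ring R] (n : ℕ) {x : R}
    (h : (-1 : R) ^ n * x = 0) : x = 0 := by
  rcases Nat.even_or_odd n with he | ho
  · rwa [he.neg_one_pow, one_mul] at h
  · rw [ho.neg_one_pow, neg_one_mul, neg_eq_zero] at h
    exact h

private lemma key_v {R : Type*} [CommRing R] (v : R) (l : ℕ)
    (h : (-v) ^ l * 1 ^ 0 * v = 0) : v ^ (l + 1) = 0 := by
  rw [neg_pow] at h
  refine cancel_neg_one_pow l ?_
  linear_combination h

private lemma key_w {R : Type*} [CommRing R] (v w r : R) (k b : ℕ)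
    (h : (-(r * v + w)) ^ k * (-w) ^ b * w = 0) : w ^ (b + 1) * (w + r * v) ^ k = 0 := by
  rw [neg_pow, neg_pow] at h
  refine cancel_neg_one_pow (k + b) ?_
  linear_combination h

private def genSet (ℓ k₁ b : ℕ) (ρ : ℤ) :
    Set (MvPolynomial (Fin (ℓ + 1) ⊕ Fin (k₁ + (b + 1))) ℤ) :=
  ({∏ i : Fin (ℓ + 1), X (Sum.inl i), ∏ j : Fin (k₁ + (b + 1)), X (Sum.inr j)} :
      Set (MvPolynomial (Fin (ℓ + 1) ⊕ Fin (k₁ + (b + 1))) ℤ)) ∪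
    {p | ∃ i : Fin (ℓ + 1), (i : ℕ) < ℓ ∧
        p = X (Sum.inl i) + X (Sum.inl (Fin.last ℓ))} ∪
    {p | ∃ j : Fin (k₁ + (b + 1)), (j : ℕ) < k₁ ∧
        p = X (Sum.inr j) + C ρ * X (Sum.inl (Fin.last ℓ)) +
          X (Sum.inr ⟨k₁ + b, by omega⟩)} ∪
    {p | ∃ j : Fin (k₁ + (b + 1)), k₁ ≤ (j : ℕ) ∧ (j : ℕ) < k₁ + b ∧
        p = X (Sum.inr j) + X (Sum.inr ⟨k₁ + b, by omega⟩)}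

private theorem aux (ℓ k₁ b : ℕ) (ρ : ℤ) :
    Nonempty
      ((MvPolynomial (Fin (ℓ + 1) ⊕ Fin (k₁ + (b + 1))) ℤ ⧸ Ideal.span (genSet ℓ k₁ b ρ)) ≃+*
        (MvPolynomial (Fin 2) ℤ ⧸
          Ideal.span ({X 0 ^ (ℓ + 1), X 1 ^ (b + 1) * (X 1 + C ρ * X 0) ^ k₁} :
            Set (MvPolynomial (Fin 2) ℤ)))) := by
  classical
  set I : Ideal (MvPolynomial (Fin (ℓ + 1) ⊕ Fin (k₁ + (b + 1))) ℤ) :=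
    Ideal.span (genSet ℓ k₁ b ρ) with hIdef
  set J : Ideal (MvPolynomial (Fin 2) ℤ) :=
    Ideal.span ({X 0 ^ (ℓ + 1), X 1 ^ (b + 1) * (X 1 + C ρ * X 0) ^ k₁} :
      Set (MvPolynomial (Fin 2) ℤ)) with hJdef
  -- memberships
  have memJ1 : (X 0 ^ (ℓ + 1) : MvPolynomial (Fin 2) ℤ) ∈ J :=
    Ideal.subset_span (Set.mem_insert _ _)
  have memJ2 : (X 1 ^ (b + 1) * (X 1 + C ρ * X 0) ^ k₁ : MvPolynomial (Fin 2) ℤ) ∈ J :=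
    Ideal.subset_span (Set.mem_insert_of_mem _ rfl)
  have memI1 : (∏ i : Fin (ℓ + 1), X (Sum.inl i) :
      MvPolynomial (Fin (ℓ + 1) ⊕ Fin (k₁ + (b + 1))) ℤ) ∈ I :=
    Ideal.subset_span (Or.inl (Or.inl (Or.inl (Set.mem_insert _ _))))
  have memI2 : (∏ j : Fin (k₁ + (b + 1)), X (Sum.inr j) :
      MvPolynomial (Fin (ℓ + 1) ⊕ Fin (k₁ + (b + 1))) ℤ) ∈ I :=
    Ideal.subset_span (Or.inl (Or.inl (Or.inl (Set.mem_insert_of_mem _ rfl))))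
  have memI3 : ∀ i : Fin (ℓ + 1), (i : ℕ) < ℓ →
      (X (Sum.inl i) + X (Sum.inl (Fin.last ℓ)) :
        MvPolynomial (Fin (ℓ + 1) ⊕ Fin (k₁ + (b + 1))) ℤ) ∈ I :=
    fun i hi => Ideal.subset_span (Or.inl (Or.inl (Or.inr ⟨i, hi, rfl⟩)))
  have memI4 : ∀ j : Fin (k₁ + (b + 1)), (j : ℕ) < k₁ →
      (X (Sum.inr j) + C ρ * X (Sum.inl (Fin.last ℓ)) + X (Sum.inr ⟨k₁ + b, by omega⟩) :
        MvPolynomial (Fin (ℓ + 1) ⊕ Fin (k₁ + (b + 1))) ℤ) ∈ I :=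
    fun j hj => Ideal.subset_span (Or.inl (Or.inr ⟨j, hj, rfl⟩))
  have memI5 : ∀ j : Fin (k₁ + (b + 1)), k₁ ≤ (j : ℕ) → (j : ℕ) < k₁ + b →
      (X (Sum.inr j) + X (Sum.inr ⟨k₁ + b, by omega⟩) :
        MvPolynomial (Fin (ℓ + 1) ⊕ Fin (k₁ + (b + 1))) ℤ) ∈ I :=
    fun j h1 h2 => Ideal.subset_span (Or.inr ⟨j, h1, h2, rfl⟩)
  set v : MvPolynomial (Fin (ℓ + 1) ⊕ Fin (k₁ + (b + 1))) ℤ ⧸ I :=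
    Ideal.Quotient.mk I (X (Sum.inl (Fin.last ℓ))) with hvdef
  set w : MvPolynomial (Fin (ℓ + 1) ⊕ Fin (k₁ + (b + 1))) ℤ ⧸ I :=
    Ideal.Quotient.mk I (X (Sum.inr (⟨k₁ + b, by omega⟩ : Fin (k₁ + (b + 1))))) with hwdef
  set r : MvPolynomial (Fin (ℓ + 1) ⊕ Fin (k₁ + (b + 1))) ℤ ⧸ I :=
    Ideal.Quotient.mk I (C ρ) with hrdef
  have relV : ∀ i : Fin (ℓ + 1), (i : ℕ) < ℓ →
      Ideal.Quotient.mk I (X (Sum.inl i)) = -v := by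
    intro i hi
    have h0 : Ideal.Quotient.mk I (X (Sum.inl i) + X (Sum.inl (Fin.last ℓ))) = 0 :=
      Ideal.Quotient.eq_zero_iff_mem.mpr (memI3 i hi)
    rw [map_add] at h0
    rw [hvdef]
    linear_combination h0
  have relW1 : ∀ j : Fin (k₁ + (b + 1)), (j : ℕ) < k₁ →
      Ideal.Quotient.mk I (X (Sum.inr j)) = -(r * v + w) := by
    intro j hj
    have h0 : Ideal.Quotient.mk I
        (X (Sum.inr j) + C ρ * X (Sum.inl (Fin.last ℓ)) + X (Sum.inr ⟨k₁ + b, by omega⟩)) = 0 :=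
      Ideal.Quotient.eq_zero_iff_mem.mpr (memI4 j hj)
    rw [map_add, map_add, map_mul] at h0
    rw [hvdef, hwdef, hrdef]
    linear_combination h0
  have relW2 : ∀ j : Fin (k₁ + (b + 1)), k₁ ≤ (j : ℕ) → (j : ℕ) < k₁ + b →
      Ideal.Quotient.mk I (X (Sum.inr j)) = -w := by
    intro j h1 h2
    have h0 : Ideal.Quotient.mk I (X (Sum.inr j) + X (Sum.inr ⟨k₁ + b, by omega⟩)) = 0 :=
      Ideal.Quotient.eq_zero_iff_mem.mpr (memI5 j h1 h2)
    rw [map_add] at h0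
    rw [hwdef]
    linear_combination h0
  have hv : v ^ (ℓ + 1) = 0 := by
    have h0 : Ideal.Quotient.mk I (∏ i : Fin (ℓ + 1), X (Sum.inl i)) = 0 :=
      Ideal.Quotient.eq_zero_iff_mem.mpr memI1
    rw [map_prod] at h0
    have e := prod_three (n := ℓ + 1) ℓ 0 (by omega) (-v) 1 v
      (fun i => Ideal.Quotient.mk I (X (Sum.inl i)))
      (fun j hj => relV j hj)
      (fun j h1 h2 => absurd h2 (by omega))
      (fun j hj => by
        have hj' : j = Fin.last ℓ := Fin.ext (by simpa using hj)
        rw [hj', hvdef])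
    rw [e] at h0
    exact key_v v ℓ h0
  have hw : w ^ (b + 1) * (w + r * v) ^ k₁ = 0 := by
    have h0 : Ideal.Quotient.mk I (∏ j : Fin (k₁ + (b + 1)), X (Sum.inr j)) = 0 :=
      Ideal.Quotient.eq_zero_iff_mem.mpr memI2
    rw [map_prod] at h0
    have e := prod_three (n := k₁ + (b + 1)) k₁ b (by omega) (-(r * v + w)) (-w) w
      (fun j => Ideal.Quotient.mk I (X (Sum.inr j)))
      (fun j hj => relW1 j hj)
      (fun j h1 h2 => relW2 j h1 h2)
      (fun j hj => by
        have hj' : j = ⟨k₁ + b, by omega⟩ := Fin.ext (by simpa using hj)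
        rw [hj', hwdef])
    rw [e] at h0
    exact key_w v w r k₁ b h0
  -- the forward substitution
  set g : Fin (ℓ + 1) ⊕ Fin (k₁ + (b + 1)) → MvPolynomial (Fin 2) ℤ :=
    Sum.elim (fun i => if (i : ℕ) < ℓ then -X 0 else X 0)
      (fun j => if (j : ℕ) < k₁ then -(X 1 + C ρ * X 0)
        else if (j : ℕ) < k₁ + b then -X 1 else X 1) with hgdef
  have hg1 : ∀ i : Fin (ℓ + 1), (i : ℕ) < ℓ → g (Sum.inl i) = -X 0 := by
    intro i hi; simp only [hgdef, Sum.elim_inl, if_pos hi]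
  have hg2 : g (Sum.inl (Fin.last ℓ)) = X 0 := by
    simp only [hgdef, Sum.elim_inl, Fin.val_last, lt_self_iff_false, if_false]
  have hg3 : ∀ j : Fin (k₁ + (b + 1)), (j : ℕ) < k₁ → g (Sum.inr j) = -(X 1 + C ρ * X 0) := by
    intro j hj; simp only [hgdef, Sum.elim_inr, if_pos hj]
  have hg4 : ∀ j : Fin (k₁ + (b + 1)), k₁ ≤ (j : ℕ) → (j : ℕ) < k₁ + b →
      g (Sum.inr j) = -X 1 := by
    intro j h1 h2
    simp only [hgdef, Sum.elim_inr, if_neg (by omega : ¬ (j : ℕ) < k₁), if_pos h2]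
  have hg5 : g (Sum.inr ⟨k₁ + b, by omega⟩) = X 1 := by
    simp only [hgdef, Sum.elim_inr]
    rw [if_neg (by omega), if_neg (by omega)]
  -- kernel condition for the forward map
  have hkerF : ∀ a ∈ I, ((Ideal.Quotient.mkₐ ℤ J).comp (aeval g)) a = 0 := by
    have hsub : I ≤ RingHom.ker ((Ideal.Quotient.mkₐ ℤ J).comp (aeval g)) := by
      rw [hIdef]
      refine Ideal.span_le.mpr ?_
      intro p hp
      simp only [genSet, Set.mem_union, Set.mem_insert_iff, Set.mem_singleton_iff,
        Set.mem_setOf_eq] at hp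
      simp only [SetLike.mem_coe, RingHom.mem_ker, AlgHom.coe_comp, Function.comp_apply,
        Ideal.Quotient.mkₐ_eq_mk]
      obtain (((rfl | rfl) | ⟨i, hi, rfl⟩) | ⟨j, hj, rfl⟩) | ⟨j, hj1, hj2, rfl⟩ := hp
      · -- product of v's
        rw [map_prod, Ideal.Quotient.eq_zero_iff_mem]
        have e := prod_three (n := ℓ + 1) ℓ 0 (by omega) (-X 0 : MvPolynomial (Fin 2) ℤ) 1 (X 0)
          (fun i => (aeval g : MvPolynomial (Fin (ℓ + 1) ⊕ Fin (k₁ + (b + 1))) ℤ →ₐ[ℤ] MvPolynomial (Fin 2) ℤ) (X (Sum.inl i)))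
          (fun j hj => by simp only [aeval_X]; exact hg1 j hj)
          (fun j h1 h2 => absurd h2 (by omega))
          (fun j hj => by
            have hj' : j = Fin.last ℓ := Fin.ext (by simpa using hj)
            rw [hj']
            simp only [aeval_X]; exact hg2)
        rw [e]
        have he : ((-X 0 : MvPolynomial (Fin 2) ℤ) ^ ℓ * 1 ^ 0 * X 0) =
            (-1 : MvPolynomial (Fin 2) ℤ) ^ ℓ * X 0 ^ (ℓ + 1) := by
          rw [neg_pow]; ring
        rw [he]
        exact Ideal.mul_mem_left _ _ memJ1
      · -- product of w's
        rw [map_prod, Ideal.Quotient.eq_zero_iff_mem]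
        have e := prod_three (n := k₁ + (b + 1)) k₁ b (by omega)
          (-(X 1 + C ρ * X 0) : MvPolynomial (Fin 2) ℤ) (-X 1) (X 1)
          (fun j => (aeval g : MvPolynomial (Fin (ℓ + 1) ⊕ Fin (k₁ + (b + 1))) ℤ →ₐ[ℤ] MvPolynomial (Fin 2) ℤ) (X (Sum.inr j)))
          (fun j hj => by simp only [aeval_X]; exact hg3 j hj)
          (fun j h1 h2 => by simp only [aeval_X]; exact hg4 j h1 h2)
          (fun j hj => by
            have hj' : j = ⟨k₁ + b, by omega⟩ := Fin.ext (by simpa using hj)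
            rw [hj']
            simp only [aeval_X]; exact hg5)
        rw [e]
        have he : ((-(X 1 + C ρ * X 0) : MvPolynomial (Fin 2) ℤ) ^ k₁ * (-X 1) ^ b * X 1) =
            ((-1 : MvPolynomial (Fin 2) ℤ) ^ k₁ * (-1) ^ b) *
              (X 1 ^ (b + 1) * (X 1 + C ρ * X 0) ^ k₁) := by
          rw [neg_pow, neg_pow]; ring
        rw [he]
        exact Ideal.mul_mem_left _ _ memJ2
      · -- v relations
        have hz : (aeval g : MvPolynomial (Fin (ℓ + 1) ⊕ Fin (k₁ + (b + 1))) ℤ →ₐ[ℤ] MvPolynomial (Fin 2) ℤ) (X (Sum.inl i) + X (Sum.inl (Fin.last ℓ))) = 0 := by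
          simp only [map_add, aeval_X]
          rw [hg1 i hi, hg2]; ring
        rw [hz, map_zero]
      · -- w relations, first kind
        have hz : (aeval g : MvPolynomial (Fin (ℓ + 1) ⊕ Fin (k₁ + (b + 1))) ℤ →ₐ[ℤ] MvPolynomial (Fin 2) ℤ) (X (Sum.inr j) + C ρ * X (Sum.inl (Fin.last ℓ)) +
            X (Sum.inr (⟨k₁ + b, by omega⟩ : Fin (k₁ + (b + 1))))) = 0 := by
          simp only [map_add, map_mul, aeval_X, aeval_C]
          rw [hg3 j hj, hg2, hg5, MvPolynomial.algebraMap_eq]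
          ring
        rw [hz, map_zero]
      · -- w relations, second kind
        have hz : (aeval g : MvPolynomial (Fin (ℓ + 1) ⊕ Fin (k₁ + (b + 1))) ℤ →ₐ[ℤ] MvPolynomial (Fin 2) ℤ) (X (Sum.inr j) +
            X (Sum.inr (⟨k₁ + b, by omega⟩ : Fin (k₁ + (b + 1))))) = 0 := by
          simp only [map_add, aeval_X]
          rw [hg4 j hj1 hj2, hg5]; ring
        rw [hz, map_zero]
    exact fun a ha => RingHom.mem_ker.mp (hsub ha)
  -- reverse substitution
  set h2 : Fin 2 → (MvPolynomial (Fin (ℓ + 1) ⊕ Fin (k₁ + (b + 1))) ℤ ⧸ I) := ![v, w] with hh2def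
  have hr : algebraMap ℤ (MvPolynomial (Fin (ℓ + 1) ⊕ Fin (k₁ + (b + 1))) ℤ ⧸ I) ρ = r := by
    rw [hrdef, ← MvPolynomial.algebraMap_eq]
    exact ((Ideal.Quotient.mkₐ ℤ I).commutes ρ).symm
  have hkerG : ∀ a ∈ J,
      (aeval h2 : MvPolynomial (Fin 2) ℤ →ₐ[ℤ]
        (MvPolynomial (Fin (ℓ + 1) ⊕ Fin (k₁ + (b + 1))) ℤ ⧸ I)) a = 0 := by
    have hsub : J ≤ RingHom.ker (aeval h2 : MvPolynomial (Fin 2) ℤ →ₐ[ℤ]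
        (MvPolynomial (Fin (ℓ + 1) ⊕ Fin (k₁ + (b + 1))) ℤ ⧸ I)) := by
      rw [hJdef]
      refine Ideal.span_le.mpr ?_
      intro p hp
      simp only [Set.mem_insert_iff, Set.mem_singleton_iff] at hp
      simp only [SetLike.mem_coe, RingHom.mem_ker]
      obtain rfl | rfl := hp
      · rw [map_pow, aeval_X]
        simp only [hh2def, Matrix.cons_val_zero]
        exact hv
      · rw [map_mul, map_pow, map_pow, map_add, map_mul, aeval_X, aeval_X, aeval_C, hr]
        simp only [hh2def, Matrix.cons_val_zero, Matrix.cons_val_one, Matrix.head_cons]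
        exact hw
    exact fun a ha => RingHom.mem_ker.mp (hsub ha)
  -- the two algebra maps
  set Φ := Ideal.Quotient.liftₐ I ((Ideal.Quotient.mkₐ ℤ J).comp (aeval g)) hkerF with hΦdef
  set Ψ := Ideal.Quotient.liftₐ J (aeval h2) hkerG with hΨdef
  have hΦmk : ∀ p, Φ (Ideal.Quotient.mk I p) = Ideal.Quotient.mk J (aeval g p) := by
    intro p
    rw [hΦdef, Ideal.Quotient.liftₐ_apply]
    rfl
  have hΨmk : ∀ p, Ψ (Ideal.Quotient.mk J p) = aeval h2 p := by
    intro p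
    rw [hΨdef, Ideal.Quotient.liftₐ_apply]
    rfl
  have haeg : ∀ s, (aeval g : MvPolynomial (Fin (ℓ + 1) ⊕ Fin (k₁ + (b + 1))) ℤ →ₐ[ℤ]
      MvPolynomial (Fin 2) ℤ) (X s) = g s := fun s => by rw [aeval_X]
  have haeh : ∀ i : Fin 2, (aeval h2 : MvPolynomial (Fin 2) ℤ →ₐ[ℤ]
      MvPolynomial (Fin (ℓ + 1) ⊕ Fin (k₁ + (b + 1))) ℤ ⧸ I) (X i) = h2 i :=
    fun i => by rw [aeval_X]
  have h20 : h2 0 = v := rfl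
  have h21 : h2 1 = w := rfl
  refine ⟨(AlgEquiv.ofAlgHom Φ Ψ ?_ ?_).toRingEquiv⟩
  · -- Φ ∘ Ψ = id
    refine Ideal.Quotient.algHom_ext ℤ (MvPolynomial.algHom_ext fun i => ?_)
    simp only [AlgHom.coe_comp, Function.comp_apply, Ideal.Quotient.mkₐ_eq_mk, AlgHom.id_apply]
    rw [hΨmk, haeh]
    fin_cases i
    · show Φ (h2 0) = Ideal.Quotient.mk J (X 0)
      rw [h20, hvdef, hΦmk, haeg, hg2]
    · show Φ (h2 1) = Ideal.Quotient.mk J (X 1)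
      rw [h21, hwdef, hΦmk, haeg, hg5]
  · -- Ψ ∘ Φ = id
    refine Ideal.Quotient.algHom_ext ℤ (MvPolynomial.algHom_ext fun s => ?_)
    simp only [AlgHom.coe_comp, Function.comp_apply, Ideal.Quotient.mkₐ_eq_mk, AlgHom.id_apply]
    rw [hΦmk, haeg]
    rcases s with i | j
    · by_cases hi : (i : ℕ) < ℓ
      · rw [hg1 i hi, map_neg, map_neg, hΨmk, haeh, h20]
        exact (relV i hi).symm
      · have hival : (i : ℕ) = ℓ := by have := i.isLt; omega
        have hi' : i = Fin.last ℓ := Fin.ext (by simpa using hival)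
        rw [hi', hg2, hΨmk, haeh, h20, hvdef]
    · by_cases hj : (j : ℕ) < k₁
      · have hax : (aeval h2) (X 1 + C ρ * X 0) =
            (w + r * v : MvPolynomial (Fin (ℓ + 1) ⊕ Fin (k₁ + (b + 1))) ℤ ⧸ I) := by
          rw [map_add, map_mul, aeval_C, hr, haeh, haeh, h20, h21]
        rw [hg3 j hj, map_neg, map_neg, hΨmk, hax]
        linear_combination (relW1 j hj).symm
      · by_cases hj2 : (j : ℕ) < k₁ + b
        · rw [hg4 j (by omega) hj2, map_neg, map_neg, hΨmk, haeh, h21]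
          exact (relW2 j (by omega) hj2).symm
        · have hjval : (j : ℕ) = k₁ + b := by have := j.isLt; omega
          have hj' : j = ⟨k₁ + b, by omega⟩ := Fin.ext (by simpa using hjval)
          rw [hj', hg5, hΨmk, haeh, h21, hwdef]

theorem stmt4 (ℓ k₁ k₂ : ℕ) (hℓ : 1 ≤ ℓ) (hk₁ : 1 ≤ k₁) (hk₂ : 1 ≤ k₂) (ρ : ℤ) :
    Nonempty
      ((MvPolynomial (Fin (ℓ + 1) ⊕ Fin (k₁ + k₂)) ℤ ⧸
          Ideal.span
            (({∏ i : Fin (ℓ + 1), X (Sum.inl i), ∏ j : Fin (k₁ + k₂), X (Sum.inr j)} :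
                Set (MvPolynomial (Fin (ℓ + 1) ⊕ Fin (k₁ + k₂)) ℤ)) ∪
              {p | ∃ i : Fin (ℓ + 1), (i : ℕ) < ℓ ∧
                  p = X (Sum.inl i) + X (Sum.inl (Fin.last ℓ))} ∪
              {p | ∃ j : Fin (k₁ + k₂), (j : ℕ) < k₁ ∧
                  p = X (Sum.inr j) + C ρ * X (Sum.inl (Fin.last ℓ)) +
                    X (Sum.inr ⟨k₁ + k₂ - 1, by omega⟩)} ∪
              {p | ∃ j : Fin (k₁ + k₂), k₁ ≤ (j : ℕ) ∧ (j : ℕ) < k₁ + k₂ - 1 ∧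
                  p = X (Sum.inr j) + X (Sum.inr ⟨k₁ + k₂ - 1, by omega⟩)})) ≃+*
        (MvPolynomial (Fin 2) ℤ ⧸
          Ideal.span ({X 0 ^ (ℓ + 1), X 1 ^ k₂ * (X 1 + C ρ * X 0) ^ k₁} :
            Set (MvPolynomial (Fin 2) ℤ)))) := by
  obtain ⟨b, rfl⟩ : ∃ b, k₂ = b + 1 := ⟨k₂ - 1, by omega⟩
  exact aux ℓ k₁ b ρ
end

section
/- Let k₁, k₂ ≥ 1, ℓ ≥ 1, ρ ∈ ℤ, and consider R = ℤ[x,y]/⟨x^{ℓ+1}, y^{k₂}(y+ρx)^{k₁}⟩ with deg x = deg y = 2. Then R is a free ℤ-module of rank (ℓ+1)·(k₁+k₂), with basis the monomials x^i·y^j for 0 ≤ i ≤ ℓ and 0 ≤ j ≤ k₁+k₂−1. -/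
open MvPolynomial

/-- The cohomology ring `ℤ[x,y]/⟨x^{ℓ+1}, y^{k₂}(y+ρx)^{k₁}⟩` of the projectivized
bundle `S^{2ℓ+1} ×_{S¹} P(ℂ_ρ^{k₁} ⊕ ℂ^{k₂})`. -/
noncomputable def projBundleRing (ℓ k₁ k₂ : ℕ) (ρ : ℤ) :=
  MvPolynomial (Fin 2) ℤ ⧸
    Ideal.span {(X 0 : MvPolynomial (Fin 2) ℤ) ^ (ℓ + 1), X 1 ^ k₂ * (X 1 + C ρ * X 0) ^ k₁}

noncomputable instance (ℓ k₁ k₂ : ℕ) (ρ : ℤ) : CommRing (projBundleRing ℓ k₁ k₂ ρ) :=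
  Ideal.Quotient.commRing _

namespace ProjAux

variable (ℓ k₁ k₂ : ℕ) (ρ : ℤ)

/-- `A = ℤ[x]/(x^{ℓ+1})`. -/
noncomputable abbrev Aa : Type := AdjoinRoot ((Polynomial.X : Polynomial ℤ) ^ (ℓ + 1))

/-- The image of `x` in `A`. -/
noncomputable def aroot : Aa ℓ := AdjoinRoot.root _

/-- `g = y^{k₂} (y + ρ x)^{k₁}` as a polynomial over `A`. -/
noncomputable def gpoly : Polynomial (Aa ℓ) :=
  Polynomial.X ^ k₂ * (Polynomial.X + Polynomial.C ((ρ : Aa ℓ) * aroot ℓ)) ^ k₁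

instance : Nontrivial (Aa ℓ) :=
  (AdjoinRoot.lift (RingHom.id ℤ) 0
    (by rw [Polynomial.eval₂_X_pow]; exact zero_pow (Nat.succ_ne_zero ℓ))).domain_nontrivial

lemma gpoly_monic : (gpoly ℓ k₁ k₂ ρ).Monic :=
  (Polynomial.monic_X_pow k₂).mul ((Polynomial.monic_X_add_C _).pow k₁)

lemma gpoly_natDegree : (gpoly ℓ k₁ k₂ ρ).natDegree = k₂ + k₁ := by
  rw [gpoly, (Polynomial.monic_X_pow k₂).natDegree_mul ((Polynomial.monic_X_add_C _).pow k₁),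
    Polynomial.natDegree_X_pow, (Polynomial.monic_X_add_C _).natDegree_pow,
    Polynomial.natDegree_X_add_C, mul_one]

/-- `B = A[y]/(g)`. -/
noncomputable abbrev Bb : Type := AdjoinRoot (gpoly ℓ k₁ k₂ ρ)

noncomputable def yroot : Bb ℓ k₁ k₂ ρ := AdjoinRoot.root _

noncomputable def uelt : Bb ℓ k₁ k₂ ρ := algebraMap (Aa ℓ) _ (aroot ℓ)

lemma aroot_pow : aroot ℓ ^ (ℓ + 1) = 0 := by
  have := AdjoinRoot.eval₂_root ((Polynomial.X : Polynomial ℤ) ^ (ℓ + 1))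
  simpa [aroot] using this

lemma groot : yroot ℓ k₁ k₂ ρ ^ k₂ *
    (yroot ℓ k₁ k₂ ρ + AdjoinRoot.of (gpoly ℓ k₁ k₂ ρ) ((ρ : Aa ℓ) * aroot ℓ)) ^ k₁ = 0 := by
  have h := AdjoinRoot.eval₂_root (gpoly ℓ k₁ k₂ ρ)
  unfold gpoly at h
  rw [Polynomial.eval₂_mul, Polynomial.eval₂_pow, Polynomial.eval₂_pow, Polynomial.eval₂_add,
    Polynomial.eval₂_X, Polynomial.eval₂_C] at h
  exact h

noncomputable abbrev Igen : Ideal (MvPolynomial (Fin 2) ℤ) :=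
  Ideal.span {(X 0 : MvPolynomial (Fin 2) ℤ) ^ (ℓ + 1), X 1 ^ k₂ * (X 1 + C ρ * X 0) ^ k₁}

/-- The quotient ring, definally `projBundleRing`. -/
noncomputable abbrev Qq : Type := MvPolynomial (Fin 2) ℤ ⧸ Igen ℓ k₁ k₂ ρ

noncomputable def q0 : Qq ℓ k₁ k₂ ρ := Ideal.Quotient.mk _ (X 0)

noncomputable def q1 : Qq ℓ k₁ k₂ ρ := Ideal.Quotient.mk _ (X 1)

lemma q0_pow : q0 ℓ k₁ k₂ ρ ^ (ℓ + 1) = 0 := by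
  rw [q0, ← map_pow]
  exact Ideal.Quotient.eq_zero_iff_mem.mpr (Ideal.subset_span (by left; rfl))

lemma q_rel : q1 ℓ k₁ k₂ ρ ^ k₂ * (q1 ℓ k₁ k₂ ρ + (ρ : Qq ℓ k₁ k₂ ρ) * q0 ℓ k₁ k₂ ρ) ^ k₁ = 0 := by
  have h : ((ρ : Qq ℓ k₁ k₂ ρ)) = Ideal.Quotient.mk _ (C ρ : MvPolynomial (Fin 2) ℤ) := by
    rw [← map_intCast (Ideal.Quotient.mk (Igen ℓ k₁ k₂ ρ)) ρ]
    norm_cast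
  rw [q0, q1, h, ← map_mul, ← map_add, ← map_pow, ← map_pow, ← map_mul]
  exact Ideal.Quotient.eq_zero_iff_mem.mpr (Ideal.subset_span (by right; rfl))

/-- The evaluation map `ℤ[x,y] → B`. -/
noncomputable def psi : MvPolynomial (Fin 2) ℤ →+* Bb ℓ k₁ k₂ ρ :=
  MvPolynomial.eval₂Hom (Int.castRingHom _) ![uelt ℓ k₁ k₂ ρ, yroot ℓ k₁ k₂ ρ]

lemma psi_X0 : psi ℓ k₁ k₂ ρ (X 0) = uelt ℓ k₁ k₂ ρ := by simp [psi]

lemma psi_X1 : psi ℓ k₁ k₂ ρ (X 1) = yroot ℓ k₁ k₂ ρ := by simp [psi]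

lemma psi_ker : Igen ℓ k₁ k₂ ρ ≤ RingHom.ker (psi ℓ k₁ k₂ ρ) := by
  rw [Ideal.span_le]
  rintro p (rfl | rfl)
  · show psi ℓ k₁ k₂ ρ _ = 0
    rw [map_pow, psi_X0, uelt, ← map_pow, aroot_pow, map_zero]
  · show psi ℓ k₁ k₂ ρ _ = 0
    have h := groot ℓ k₁ k₂ ρ
    rw [map_mul, map_pow, map_pow, map_add, map_mul, psi_X0, psi_X1]
    have hc : (psi ℓ k₁ k₂ ρ) (C ρ) = AdjoinRoot.of (gpoly ℓ k₁ k₂ ρ) ((ρ : Aa ℓ)) := by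
      simp [psi]
    rw [hc, uelt, AdjoinRoot.algebraMap_eq, ← map_mul]
    exact h

/-- The induced map `Q → B`. -/
noncomputable def Psi : Qq ℓ k₁ k₂ ρ →+* Bb ℓ k₁ k₂ ρ :=
  Ideal.Quotient.lift _ (psi ℓ k₁ k₂ ρ) (fun _ ha => RingHom.mem_ker.mp (psi_ker ℓ k₁ k₂ ρ ha))

lemma Psi_q0 : Psi ℓ k₁ k₂ ρ (q0 ℓ k₁ k₂ ρ) = uelt ℓ k₁ k₂ ρ := by
  rw [Psi, q0, Ideal.Quotient.lift_mk, psi_X0]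

lemma Psi_q1 : Psi ℓ k₁ k₂ ρ (q1 ℓ k₁ k₂ ρ) = yroot ℓ k₁ k₂ ρ := by
  rw [Psi, q1, Ideal.Quotient.lift_mk, psi_X1]

/-- The inverse on `A`. -/
noncomputable def chiA : Aa ℓ →+* Qq ℓ k₁ k₂ ρ :=
  AdjoinRoot.lift (Int.castRingHom _) (q0 ℓ k₁ k₂ ρ)
    (by rw [Polynomial.eval₂_X_pow]; exact q0_pow ℓ k₁ k₂ ρ)

lemma chiA_root : chiA ℓ k₁ k₂ ρ (aroot ℓ) = q0 ℓ k₁ k₂ ρ := AdjoinRoot.lift_root _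

lemma chi_aux : Polynomial.eval₂ (chiA ℓ k₁ k₂ ρ) (q1 ℓ k₁ k₂ ρ) (gpoly ℓ k₁ k₂ ρ) = 0 := by
  rw [gpoly, Polynomial.eval₂_mul, Polynomial.eval₂_pow, Polynomial.eval₂_pow,
    Polynomial.eval₂_add, Polynomial.eval₂_X, Polynomial.eval₂_C, map_mul, map_intCast, chiA_root]
  exact q_rel ℓ k₁ k₂ ρ

/-- The inverse map `B → Q`. -/
noncomputable def chi : Bb ℓ k₁ k₂ ρ →+* Qq ℓ k₁ k₂ ρ :=
  AdjoinRoot.lift (chiA ℓ k₁ k₂ ρ) (q1 ℓ k₁ k₂ ρ) (chi_aux ℓ k₁ k₂ ρ)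

lemma chi_uelt : chi ℓ k₁ k₂ ρ (uelt ℓ k₁ k₂ ρ) = q0 ℓ k₁ k₂ ρ := by
  rw [uelt, AdjoinRoot.algebraMap_eq, chi, AdjoinRoot.lift_of, chiA_root]

lemma chi_yroot : chi ℓ k₁ k₂ ρ (yroot ℓ k₁ k₂ ρ) = q1 ℓ k₁ k₂ ρ := AdjoinRoot.lift_root _

lemma left_inv : (chi ℓ k₁ k₂ ρ).comp (Psi ℓ k₁ k₂ ρ) = RingHom.id _ := by
  apply Ideal.Quotient.ringHom_ext
  apply MvPolynomial.ringHom_ext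
  · intro r
    simp only [RingHom.coe_comp, Function.comp_apply, RingHom.id_apply]
    rw [eq_intCast (MvPolynomial.C : ℤ →+* MvPolynomial (Fin 2) ℤ) r]
    simp [map_intCast]
  · intro i
    fin_cases i
    · simp only [RingHom.coe_comp, Function.comp_apply, RingHom.id_apply]
      show chi ℓ k₁ k₂ ρ (Psi ℓ k₁ k₂ ρ (q0 ℓ k₁ k₂ ρ)) = q0 ℓ k₁ k₂ ρ
      rw [Psi_q0, chi_uelt]
    · simp only [RingHom.coe_comp, Function.comp_apply, RingHom.id_apply]
      show chi ℓ k₁ k₂ ρ (Psi ℓ k₁ k₂ ρ (q1 ℓ k₁ k₂ ρ)) = q1 ℓ k₁ k₂ ρ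
      rw [Psi_q1, chi_yroot]

lemma right_inv : (Psi ℓ k₁ k₂ ρ).comp (chi ℓ k₁ k₂ ρ) = RingHom.id _ := by
  apply Ideal.Quotient.ringHom_ext
  apply Polynomial.ringHom_ext'
  · -- agreement on constants from `A`
    apply Ideal.Quotient.ringHom_ext
    apply Polynomial.ringHom_ext'
    · exact RingHom.ext_int _ _
    · show Psi ℓ k₁ k₂ ρ (chi ℓ k₁ k₂ ρ (AdjoinRoot.of (gpoly ℓ k₁ k₂ ρ) (aroot ℓ))) =
        AdjoinRoot.of (gpoly ℓ k₁ k₂ ρ) (aroot ℓ)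
      rw [chi, AdjoinRoot.lift_of, chiA_root, Psi_q0, uelt, AdjoinRoot.algebraMap_eq]
  · show Psi ℓ k₁ k₂ ρ (chi ℓ k₁ k₂ ρ (yroot ℓ k₁ k₂ ρ)) = yroot ℓ k₁ k₂ ρ
    rw [chi_yroot, Psi_q1]

/-- The ring isomorphism `Q ≃+* B`. -/
noncomputable def ringE : Qq ℓ k₁ k₂ ρ ≃+* Bb ℓ k₁ k₂ ρ :=
  RingEquiv.ofRingHom (Psi ℓ k₁ k₂ ρ) (chi ℓ k₁ k₂ ρ) (right_inv ℓ k₁ k₂ ρ)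
    (left_inv ℓ k₁ k₂ ρ)

/-- Basis of `A` over `ℤ`. -/
noncomputable def basisA : Module.Basis (Fin (ℓ + 1)) ℤ (Aa ℓ) :=
  (AdjoinRoot.powerBasis' (Polynomial.monic_X_pow (ℓ + 1))).basis.reindex
    (finCongr (by rw [AdjoinRoot.powerBasis'_dim, Polynomial.natDegree_X_pow]))

lemma basisA_apply (i : Fin (ℓ + 1)) : basisA ℓ i = aroot ℓ ^ (i : ℕ) := by
  rw [basisA, Module.Basis.reindex_apply, PowerBasis.basis_eq_pow]
  simp [AdjoinRoot.powerBasis'_gen, aroot]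

/-- Basis of `B` over `A`. -/
noncomputable def basisB : Module.Basis (Fin (k₁ + k₂)) (Aa ℓ) (Bb ℓ k₁ k₂ ρ) :=
  (AdjoinRoot.powerBasis' (gpoly_monic ℓ k₁ k₂ ρ)).basis.reindex
    (finCongr (by rw [AdjoinRoot.powerBasis'_dim, gpoly_natDegree]; omega))

lemma basisB_apply (j : Fin (k₁ + k₂)) : basisB ℓ k₁ k₂ ρ j = yroot ℓ k₁ k₂ ρ ^ (j : ℕ) := by
  rw [basisB, Module.Basis.reindex_apply, PowerBasis.basis_eq_pow]
  simp [AdjoinRoot.powerBasis'_gen, yroot]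

/-- Basis of `B` over `ℤ`. -/
noncomputable def basisZB : Module.Basis (Fin (ℓ + 1) × Fin (k₁ + k₂)) ℤ (Bb ℓ k₁ k₂ ρ) :=
  (basisA ℓ).smulTower (basisB ℓ k₁ k₂ ρ)

lemma basisZB_apply (p : Fin (ℓ + 1) × Fin (k₁ + k₂)) :
    basisZB ℓ k₁ k₂ ρ p = uelt ℓ k₁ k₂ ρ ^ (p.1 : ℕ) * yroot ℓ k₁ k₂ ρ ^ (p.2 : ℕ) := by
  rw [basisZB, Module.Basis.smulTower_apply, basisA_apply, basisB_apply, Algebra.smul_def, map_pow]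
  rfl

end ProjAux

theorem stmt9 (ℓ k₁ k₂ : ℕ) (hℓ : 1 ≤ ℓ) (hk₁ : 1 ≤ k₁) (hk₂ : 1 ≤ k₂) (ρ : ℤ) :
    ∃ b : Module.Basis (Fin (ℓ + 1) × Fin (k₁ + k₂)) ℤ (projBundleRing ℓ k₁ k₂ ρ),
      ∀ p : Fin (ℓ + 1) × Fin (k₁ + k₂),
        b p = Ideal.Quotient.mk _ (X 0 ^ (p.1 : ℕ) * X 1 ^ (p.2 : ℕ)) := by
  classical
  refine ⟨(ProjAux.basisZB ℓ k₁ k₂ ρ).map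
      ((ProjAux.ringE ℓ k₁ k₂ ρ).toAddEquiv.toIntLinearEquiv).symm, fun p => ?_⟩
  erw [Module.Basis.map_apply, ProjAux.basisZB_apply, LinearEquiv.symm_apply_eq]
  symm
  show ProjAux.Psi ℓ k₁ k₂ ρ (Ideal.Quotient.mk _ (X 0 ^ (p.1 : ℕ) * X 1 ^ (p.2 : ℕ))) = _
  rw [ProjAux.Psi, Ideal.Quotient.lift_mk, map_mul, map_pow, map_pow, ProjAux.psi_X0,
    ProjAux.psi_X1]
end
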